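/- Let A and B be integral operators on L²(0,1) with continuous kernels a and b respectively. Then B majorises A if and only if |a(x,t)| ≤ b(x,t) for all (x,t) ∈ [0,1]×[0,1]. -/

import Mathlib

open MeasureTheory

noncomputable def μ01 : Measure ℝ := volume.restrict (Set.Ioo 0 1)

/-- For integral operators `A`, `B` on `L²(0,1)` with continuous kernels `a`,
`b`, the operator `B` majorises `A` iff `|a(x,t)| ≤ b(x,t)` on `[0,1]²`. -/
theorem majorises_iff_kernel_le
    (a b : ℝ × ℝ → ℝ)
    (ha : ContinuousOn a (Set.Icc 0 1 ×ˢ Set.Icc 0 1))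
    (hb : ContinuousOn b (Set.Icc 0 1 ×ˢ Set.Icc 0 1))
    (A B : Lp ℝ 2 μ01 →L[ℝ] Lp ℝ 2 μ01)
    (hA : ∀ f : Lp ℝ 2 μ01,
      (A f : ℝ → ℝ) =ᵐ[μ01] fun x => ∫ t in Set.Ioo (0:ℝ) 1, a (x, t) * f t)
    (hB : ∀ f : Lp ℝ 2 μ01,
      (B f : ℝ → ℝ) =ᵐ[μ01] fun x => ∫ t in Set.Ioo (0:ℝ) 1, b (x, t) * f t) :
    (∀ f : Lp ℝ 2 μ01, |A f| ≤ B |f|) ↔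
      (∀ x ∈ Set.Icc (0:ℝ) 1, ∀ t ∈ Set.Icc (0:ℝ) 1, |a (x, t)| ≤ b (x, t)) := by
  haveI : IsFiniteMeasure μ01 :=
    ⟨by rw [μ01, Measure.restrict_apply_univ, Real.volume_Ioo]; simp⟩
  have hμ : μ01 = volume.restrict (Set.Ioo 0 1) := rfl
  have hIooIcc : Set.Ioo (0:ℝ) 1 ⊆ Set.Icc 0 1 := Set.Ioo_subset_Icc_self
  constructor
  · -- hard direction
    intro hmaj
    have hint : ∀ x₀ t₀ : ℝ, x₀ ∈ Set.Ioo (0:ℝ) 1 → t₀ ∈ Set.Ioo (0:ℝ) 1 →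
        |a (x₀, t₀)| ≤ b (x₀, t₀) := by
      intro x₀ t₀ hx₀ ht₀
      by_contra hcon
      push_neg at hcon
      set s : ℝ := if 0 ≤ a (x₀, t₀) then 1 else -1 with hs
      have hsabs : |s| = 1 := by rw [hs]; split <;> norm_num
      have hsa : s * a (x₀, t₀) = |a (x₀, t₀)| := by
        rw [hs]; split
        · rw [abs_of_nonneg ‹_›]; ring
        · rw [abs_of_neg (lt_of_not_ge ‹_›)]; ring
      set g : ℝ × ℝ → ℝ := fun p => s * a p - b p with hg
      have hgc : ContinuousOn g (Set.Icc 0 1 ×ˢ Set.Icc 0 1) :=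
        (continuousOn_const.mul ha).sub hb
      have hgp : 0 < g (x₀, t₀) := by simp only [hg, hsa]; linarith
      set η : ℝ := g (x₀, t₀) / 2 with hη
      have hη0 : 0 < η := by positivity
      have hηlt : η < g (x₀, t₀) := by rw [hη]; linarith
      have hmem : (x₀, t₀) ∈ Set.Ioo (0:ℝ) 1 ×ˢ Set.Ioo (0:ℝ) 1 := ⟨hx₀, ht₀⟩
      have hopen : IsOpen (Set.Ioo (0:ℝ) 1 ×ˢ Set.Ioo (0:ℝ) 1) := isOpen_Ioo.prod isOpen_Ioo
      have hsubsq : Set.Ioo (0:ℝ) 1 ×ˢ Set.Ioo (0:ℝ) 1 ⊆ Set.Icc (0:ℝ) 1 ×ˢ Set.Icc 0 1 :=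
        Set.prod_mono hIooIcc hIooIcc
      have hca : ContinuousAt g (x₀, t₀) :=
        (hgc (x₀, t₀) (hsubsq hmem)).continuousAt
          (Filter.mem_of_superset (hopen.mem_nhds hmem) hsubsq)
      have hev1 : ∀ᶠ q in nhds (x₀, t₀), η < g q := hca.eventually_mem (Ioi_mem_nhds hηlt)
      have hev : ∀ᶠ q in nhds (x₀, t₀), η < g q ∧ q ∈ Set.Ioo (0:ℝ) 1 ×ˢ Set.Ioo (0:ℝ) 1 :=
        hev1.and (Filter.eventually_mem_set.mpr (hopen.mem_nhds hmem))
      obtain ⟨δ, hδ0, hδ⟩ := Metric.eventually_nhds_iff_ball.mp hev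
      set δ' : ℝ := δ / 2 with hδ'
      have hδ'0 : 0 < δ' := by positivity
      set I : Set ℝ := Set.Ioo (x₀ - δ') (x₀ + δ') with hI
      set J : Set ℝ := Set.Ioo (t₀ - δ') (t₀ + δ') with hJ
      have hball : ∀ x t : ℝ, |x - x₀| < δ → |t - t₀| < δ →
          (η < g (x, t) ∧ x ∈ Set.Ioo (0:ℝ) 1 ∧ t ∈ Set.Ioo (0:ℝ) 1) := by
        intro x t hx ht
        have : (x, t) ∈ Metric.ball (x₀, t₀) δ := by
          rw [← ball_prod_same]
          exact ⟨by simpa [Real.dist_eq] using hx, by simpa [Real.dist_eq] using ht⟩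
        exact ⟨(hδ _ this).1, (hδ _ this).2.1, (hδ _ this).2.2⟩
      have habs : ∀ u c : ℝ, u ∈ Set.Icc (c - δ') (c + δ') → |u - c| < δ := by
        intro u c hu
        rw [abs_sub_lt_iff]
        constructor
        · linarith [hu.2]
        · linarith [hu.1]
      have hIsub : I ⊆ Set.Ioo 0 1 := fun x hx =>
        (hball x t₀ (habs x x₀ (Set.Ioo_subset_Icc_self hx)) (by simpa using hδ0)).2.1
      have hJsub : J ⊆ Set.Ioo 0 1 := fun t ht =>
        (hball x₀ t (by simpa using hδ0) (habs t t₀ (Set.Ioo_subset_Icc_self ht))).2.2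
      have hg' : ∀ x ∈ I, ∀ t ∈ J, η ≤ g (x, t) := fun x hx t ht =>
        le_of_lt (hball x t (habs x x₀ (Set.Ioo_subset_Icc_self hx))
          (habs t t₀ (Set.Ioo_subset_Icc_self ht))).1
      have hJc : Set.Icc (t₀ - δ') (t₀ + δ') ⊆ Set.Icc (0:ℝ) 1 := by
        have h1 := (hball x₀ (t₀ - δ') (by simpa using hδ0)
          (habs _ t₀ ⟨le_refl _, by linarith⟩)).2.2
        have h2 := (hball x₀ (t₀ + δ') (by simpa using hδ0)
          (habs _ t₀ ⟨by linarith, le_refl _⟩)).2.2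
        exact Set.Icc_subset_Icc h1.1.le h2.2.le
      -- the test function
      have hμJ : μ01 J ≠ ⊤ := measure_ne_top _ _
      set f : Lp ℝ 2 μ01 := indicatorConstLp 2 measurableSet_Ioo hμJ s with hf
      set F : Lp ℝ 2 μ01 := |f| with hF
      have hfcoe : (f : ℝ → ℝ) =ᵐ[μ01] J.indicator fun _ => s := indicatorConstLp_coeFn
      have hfabs : (F : ℝ → ℝ) =ᵐ[μ01] J.indicator fun _ => (1:ℝ) := by
        filter_upwards [Lp.coeFn_abs f, hfcoe] with u hu1 hu2
        rw [hF, hu1, hu2]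
        by_cases h : u ∈ J <;> simp [Set.indicator, h, hsabs]
      have hrr : μ01.restrict J = volume.restrict J := by
        rw [hμ, Measure.restrict_restrict measurableSet_Ioo, Set.inter_eq_left.mpr hJsub]
      -- rewrite A f and B |f|
      have hfx : ∀ x : ℝ, (∫ t in Set.Ioo (0:ℝ) 1, a (x, t) * (f : ℝ → ℝ) t)
          = (∫ t in J, a (x, t)) * s := by
        intro x
        have h1 : (fun t => a (x, t) * (f : ℝ → ℝ) t)
            =ᵐ[μ01] J.indicator (fun t => a (x, t) * s) := by
          filter_upwards [hfcoe] with t ht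
          simp only [ht]
          by_cases h : t ∈ J <;> simp [Set.indicator, h]
        calc (∫ t in Set.Ioo (0:ℝ) 1, a (x, t) * (f : ℝ → ℝ) t)
            = ∫ t, J.indicator (fun t => a (x, t) * s) t ∂μ01 := integral_congr_ae h1
          _ = ∫ t in J, a (x, t) * s ∂μ01 := integral_indicator measurableSet_Ioo
          _ = ∫ t in J, a (x, t) * s := by rw [hrr]
          _ = (∫ t in J, a (x, t)) * s := integral_mul_const s _
      have hbx : ∀ x : ℝ, (∫ t in Set.Ioo (0:ℝ) 1, b (x, t) * (F : ℝ → ℝ) t)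
          = ∫ t in J, b (x, t) := by
        intro x
        have h1 : (fun t => b (x, t) * (F : ℝ → ℝ) t)
            =ᵐ[μ01] J.indicator (fun t => b (x, t)) := by
          filter_upwards [hfabs] with t ht
          simp only [ht]
          by_cases h : t ∈ J <;> simp [Set.indicator, h]
        calc (∫ t in Set.Ioo (0:ℝ) 1, b (x, t) * (F : ℝ → ℝ) t)
            = ∫ t, J.indicator (fun t => b (x, t)) t ∂μ01 := integral_congr_ae h1
          _ = ∫ t in J, b (x, t) ∂μ01 := integral_indicator measurableSet_Ioo
          _ = ∫ t in J, b (x, t) := by rw [hrr]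
      have key : ∀ᵐ x ∂μ01, |(∫ t in J, a (x, t)) * s| ≤ ∫ t in J, b (x, t) := by
        have h1 : ((|A f| : Lp ℝ 2 μ01) : ℝ → ℝ) ≤ᵐ[μ01] ((B F : Lp ℝ 2 μ01) : ℝ → ℝ) :=
          (Lp.coeFn_le _ _).mpr (hmaj f)
        filter_upwards [h1, Lp.coeFn_abs (A f), hA f, hB F] with x h1 h2 h3 h4
        rw [h2, h3, h4, hbx x] at h1
        rw [← hfx x]
        exact h1
      -- pick a good x in I
      have hI0 : μ01 I ≠ 0 := by
        rw [hμ, Measure.restrict_apply measurableSet_Ioo, Set.inter_eq_left.mpr hIsub,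
          Real.volume_Ioo]
        simp only [ne_eq, ENNReal.ofReal_eq_zero, not_le]
        linarith
      obtain ⟨x, hxI, hx⟩ := μ01.exists_mem_of_measure_ne_zero_of_ae hI0 (ae_restrict_of_ae key)
      -- integrability of the kernels on J at this x
      have hmaps : Set.MapsTo (fun t => (x, t)) (Set.Icc (t₀ - δ') (t₀ + δ'))
          (Set.Icc (0:ℝ) 1 ×ˢ Set.Icc 0 1) := fun t ht => ⟨hIooIcc (hIsub hxI), hJc ht⟩
      have hcont : Continuous (fun t : ℝ => (x, t)) := Continuous.prodMk_right x
      have hax : IntegrableOn (fun t => a (x, t)) (Set.Icc (t₀ - δ') (t₀ + δ')) volume :=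
        (ha.comp hcont.continuousOn hmaps).integrableOn_compact isCompact_Icc
      have hbxx : IntegrableOn (fun t => b (x, t)) (Set.Icc (t₀ - δ') (t₀ + δ')) volume :=
        (hb.comp hcont.continuousOn hmaps).integrableOn_compact isCompact_Icc
      have hax' : IntegrableOn (fun t => a (x, t)) J volume :=
        hax.mono_set Set.Ioo_subset_Icc_self
      have hbx' : IntegrableOn (fun t => b (x, t)) J volume :=
        hbxx.mono_set Set.Ioo_subset_Icc_self
      have hsum : IntegrableOn (fun t => s * a (x, t) - b (x, t)) J volume :=
        (hax'.const_mul s).sub hbx'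
      have hvol : (volume J).toReal = δ := by
        rw [hJ, Real.volume_Ioo, ENNReal.toReal_ofReal (by linarith)]
        ring
      have hge : η * δ ≤ ∫ t in J, (s * a (x, t) - b (x, t)) := by
        rw [← hvol]
        exact setIntegral_ge_of_const_le_real measurableSet_Ioo
          (by rw [Real.volume_Ioo]; exact ENNReal.ofReal_ne_top)
          (fun t ht => hg' x hxI t ht) hsum
      rw [integral_sub (hax'.const_mul s) hbx'] at hge
      have hconst : ∫ t in J, s * a (x, t) = s * ∫ t in J, a (x, t) := integral_const_mul s _
      have habs2 : (∫ t in J, a (x, t)) * s ≤ |(∫ t in J, a (x, t)) * s| := le_abs_self _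
      have hηδ : 0 < η * δ := mul_pos hη0 hδ0
      rw [hconst] at hge
      nlinarith [hx, mul_comm s (∫ t in J, a (x, t))]
    -- density step
    intro x hx t ht
    have hcl : (x, t) ∈ closure (Set.Ioo (0:ℝ) 1 ×ˢ Set.Ioo (0:ℝ) 1) := by
      rw [closure_prod_eq, closure_Ioo (by norm_num : (0:ℝ) ≠ 1)]
      exact ⟨hx, ht⟩
    have hF : ContinuousWithinAt (fun p : ℝ × ℝ => b p - |a p|)
        (Set.Ioo (0:ℝ) 1 ×ˢ Set.Ioo (0:ℝ) 1) (x, t) :=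
      ((hb.sub ha.abs) (x, t) ⟨hx, ht⟩).mono
        (Set.prod_mono Set.Ioo_subset_Icc_self Set.Ioo_subset_Icc_self)
    haveI := mem_closure_iff_nhdsWithin_neBot.mp hcl
    have h0 : (0:ℝ) ≤ b (x, t) - |a (x, t)| := by
      refine ge_of_tendsto hF ?_
      filter_upwards [eventually_mem_nhdsWithin] with q hq
      have h1 : |a q| ≤ b q := by simpa using hint q.1 q.2 hq.1 hq.2
      simpa using sub_nonneg.mpr h1
    linarith
  · -- easy direction
    intro hker f
    set F : Lp ℝ 2 μ01 := |f| with hFdef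
    have hfL1 : Integrable (f : ℝ → ℝ) μ01 := (Lp.memLp f).integrable one_le_two
    obtain ⟨C, hC⟩ := (isCompact_Icc.prod isCompact_Icc).exists_bound_of_continuousOn hb
    refine (Lp.coeFn_le _ _).mp ?_
    have hbint : ∀ x ∈ Set.Icc (0:ℝ) 1,
        Integrable (fun t => b (x, t) * |(f : ℝ → ℝ) t|) μ01 := by
      intro x hx
      have hmeas : AEStronglyMeasurable (fun t => b (x, t)) μ01 := by
        have hcb : ContinuousOn (fun t => b (x, t)) (Set.Ioo 0 1) :=
          hb.comp (Continuous.prodMk_right x).continuousOn fun t ht => ⟨hx, hIooIcc ht⟩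
        rw [hμ]
        exact hcb.aestronglyMeasurable measurableSet_Ioo
      refine Integrable.mono' (hfL1.abs.const_mul C)
        (hmeas.mul hfL1.abs.aestronglyMeasurable) ?_
      filter_upwards [(hμ ▸ ae_restrict_mem measurableSet_Ioo : ∀ᵐ t ∂μ01, t ∈ Set.Ioo (0:ℝ) 1)]
        with t ht
      have hCb := hC (x, t) ⟨hx, hIooIcc ht⟩
      rw [Real.norm_eq_abs, abs_mul, abs_abs]
      exact mul_le_mul_of_nonneg_right (by simpa [Real.norm_eq_abs] using hCb) (abs_nonneg _)
    filter_upwards [Lp.coeFn_abs (A f), hA f, hB F,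
      (hμ ▸ ae_restrict_mem measurableSet_Ioo : ∀ᵐ x ∂μ01, x ∈ Set.Ioo (0:ℝ) 1)]
      with x h1 h2 h3 hxmem
    have hxIcc : x ∈ Set.Icc (0:ℝ) 1 := hIooIcc hxmem
    rw [h1, h2, h3]
    calc |∫ t in Set.Ioo (0:ℝ) 1, a (x, t) * (f : ℝ → ℝ) t|
        ≤ ∫ t in Set.Ioo (0:ℝ) 1, |a (x, t) * (f : ℝ → ℝ) t| := by
          have := norm_integral_le_integral_norm (μ := volume.restrict (Set.Ioo 0 1))
            (fun t => a (x, t) * (f : ℝ → ℝ) t)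
          simpa only [Real.norm_eq_abs] using this
      _ ≤ ∫ t in Set.Ioo (0:ℝ) 1, b (x, t) * |(f : ℝ → ℝ) t| := by
          refine integral_mono_of_nonneg (Filter.Eventually.of_forall fun t => abs_nonneg _)
            (hbint x hxIcc) ?_
          filter_upwards [(hμ ▸ ae_restrict_mem measurableSet_Ioo :
            ∀ᵐ t ∂μ01, t ∈ Set.Ioo (0:ℝ) 1)] with t ht
          rw [abs_mul]
          exact mul_le_mul_of_nonneg_right (hker x hxIcc t (hIooIcc ht)) (abs_nonneg _)
      _ = ∫ t in Set.Ioo (0:ℝ) 1, b (x, t) * (F : ℝ → ℝ) t := by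
          refine integral_congr_ae ?_
          filter_upwards [Lp.coeFn_abs f] with t ht
          rw [hFdef, ht]
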